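/- (Decomposition, almost-stable case) Let C be an almost-sᵢ-stable set of transpositions: sᵢ ∈ C and there is a unique transposition τ with τ ∈ C but sᵢτsᵢ ∉ C; set C₋ = C \ {τ} and C₊ = C ∪ {sᵢτsᵢ}, which are sᵢ-stable. If τ = (i ↔ k), then H_C = H_{C₊}^{∗sᵢ} ⊕ (xᵢ − xₖ)·H_{C₋}^{∗sᵢ} as an internal direct sum of ℂ[t₁,…,tₙ]-submodules; if τ = (i+1 ↔ k), then H_C = H_{C₊}^{∗sᵢ} ⊕ (xₖ − x_{i+1})·H_{C₋}^{∗sᵢ}. -/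
import Mathlib

open MvPolynomial

/-- The ring `H = Fun(Sₙ, ℂ[t₁,…,tₙ])`, with pointwise operations. -/
abbrev Hr (n : ℕ) := Equiv.Perm (Fin n) → MvPolynomial (Fin n) ℂ

/-- The element `xᵢ ∈ H`, given by `v ↦ t_{v(i)}`. -/
noncomputable def xH {n : ℕ} (i : Fin n) : Hr n := fun v => X (v i)

/-- The element `tᵢ ∈ H`, the constant function `v ↦ tᵢ`. -/
noncomputable def tH {n : ℕ} (i : Fin n) : Hr n := fun _ => X i

/-- The right star action on `H`: `(g ∗ w)(v) = g(v w⁻¹)`. -/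
noncomputable def starH {n : ℕ} (g : Hr n) (w : Equiv.Perm (Fin n)) : Hr n :=
  fun v => g (v * w⁻¹)

/-- The left dot action on `H`:
`(w · g)(v; t₁,…,tₙ) = g(w⁻¹ v; t_{w(1)},…,t_{w(n)})`. -/
noncomputable def dotH {n : ℕ} (w : Equiv.Perm (Fin n)) (g : Hr n) : Hr n :=
  fun v => rename (⇑w) (g (w⁻¹ * v))


/-- `f` satisfies the divisibility condition `τ` for a transposition `τ = (j ↔ k)`:
`f − f∗τ` is a multiple of `xⱼ − xₖ` in `H` (i.e. pointwise, with quotients in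
`ℂ[t₁,…,tₙ]`). -/
def condP {n : ℕ} (τ : Equiv.Perm (Fin n)) (f : Hr n) : Prop :=
  ∀ j k : Fin n, τ = Equiv.swap j k → (xH j - xH k) ∣ (f - starH f τ)

/-- The subring `H_C` of elements satisfying all conditions in a set `C` of
transpositions. -/
def HCset {n : ℕ} (C : Set (Equiv.Perm (Fin n))) : Set (Hr n) :=
  {f | ∀ τ ∈ C, condP τ f}

namespace ASaux

variable {n : ℕ}

lemma hr_dvd_iff (d f : Hr n) : d ∣ f ↔ ∀ v, d v ∣ f v := by
  constructor
  · rintro ⟨c, rfl⟩ v; exact ⟨c v, rfl⟩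
  · intro h
    exact ⟨fun v => (h v).choose, funext fun v => (h v).choose_spec⟩

lemma starH_add (f g : Hr n) (w : Equiv.Perm (Fin n)) :
    starH (f + g) w = starH f w + starH g w := rfl
lemma starH_sub (f g : Hr n) (w : Equiv.Perm (Fin n)) :
    starH (f - g) w = starH f w - starH g w := rfl
lemma starH_mul (f g : Hr n) (w : Equiv.Perm (Fin n)) :
    starH (f * g) w = starH f w * starH g w := rfl
lemma starH_comp (f : Hr n) (w u : Equiv.Perm (Fin n)) :
    starH (starH f w) u = starH f (w * u) := by
  funext v
  simp [starH, mul_inv_rev, mul_assoc]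
lemma starH_id (f : Hr n) : starH f 1 = f := by
  funext v; simp [starH]
lemma starH_xH (i : Fin n) (w : Equiv.Perm (Fin n)) : starH (xH i) w = xH (w⁻¹ i) := rfl
lemma starH_dvd {d m : Hr n} (w : Equiv.Perm (Fin n)) (h : d ∣ m) :
    starH d w ∣ starH m w := by
  obtain ⟨c, rfl⟩ := h; exact ⟨starH c w, rfl⟩

noncomputable def idem (p q : Fin n) :
    MvPolynomial (Fin n) ℂ →ₐ[ℂ] MvPolynomial (Fin n) ℂ :=
  aeval (fun l => if l = p then X q else X l)

lemma dvd_sub_idem (p q : Fin n) (g : MvPolynomial (Fin n) ℂ) :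
    (X p - X q) ∣ (g - idem p q g) := by
  induction g using MvPolynomial.induction_on with
  | C a => simp [idem]
  | add f g hf hg =>
      have h := dvd_add hf hg
      rw [map_add]
      rw [show f + g - (idem p q f + idem p q g)
        = (f - idem p q f) + (g - idem p q g) by ring]
      exact h
  | mul_X f i hf =>
      have h1 : (X p - X q) ∣ (X i - idem p q (X i)) := by
        by_cases h : i = p
        · subst h; simp [idem]
        · simp [idem, h]
      rw [show f * X i - idem p q (f * X i)
        = (f - idem p q f) * X i + idem p q f * (X i - idem p q (X i)) by
          rw [map_mul]; ring]
      exact dvd_add (hf.mul_right _) (h1.mul_left _)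

lemma dvd_of_idem_eq_zero {p q : Fin n} {g : MvPolynomial (Fin n) ℂ}
    (h : idem p q g = 0) : (X p - X q) ∣ g := by
  have := dvd_sub_idem p q g
  rwa [h, sub_zero] at this

lemma idem_X_sub_X (p q : Fin n) : idem p q (X p - X q) = 0 := by
  simp only [idem, map_sub, aeval_X, if_true, eq_self_iff_true, ite_self, sub_self]

lemma X_sub_X_ne_zero {p q : Fin n} (h : p ≠ q) :
    (X p - X q : MvPolynomial (Fin n) ℂ) ≠ 0 := by
  intro hz
  have h2 := congrArg (eval (fun l => if l = p then (1 : ℂ) else 0)) hz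
  simp [Ne.symm h] at h2

lemma cancel_poly {p q r s : Fin n} (hpq : p ≠ q) (hrs : r ≠ s)
    (hne1 : ¬(r = p ∧ s = q)) (hne2 : ¬(r = q ∧ s = p))
    {c : MvPolynomial (Fin n) ℂ} (h : (X p - X q) ∣ (X r - X s) * c) :
    (X p - X q) ∣ c := by
  obtain ⟨e, he⟩ := h
  have h0 : idem p q ((X r - X s) * c) = 0 := by
    rw [he, map_mul, idem_X_sub_X, zero_mul]
  rw [map_mul, map_sub, show (idem p q) (X r) = if r = p then X q else X r by simp [idem],
    show (idem p q) (X s) = if s = p then X q else X s by simp [idem]] at h0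
  rw [show (if r = p then (X q : MvPolynomial (Fin n) ℂ) else X r)
      = X (if r = p then q else r) by split_ifs <;> rfl,
    show (if s = p then (X q : MvPolynomial (Fin n) ℂ) else X s)
      = X (if s = p then q else s) by split_ifs <;> rfl] at h0
  have hne : (if r = p then q else r) ≠ (if s = p then q else s) := by
    split_ifs with h1 h2 h2
    · exact absurd (h1.trans h2.symm) hrs
    · intro hqe; exact hne1 ⟨h1, hqe.symm⟩
    · intro hqe; exact hne2 ⟨hqe, h2⟩
    · exact hrs
  rcases mul_eq_zero.mp h0 with h0 | h0
  · exact absurd h0 (X_sub_X_ne_zero hne)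
  · exact dvd_of_idem_eq_zero h0

lemma hr_cancel {j k a b : Fin n} (hjk : j ≠ k) (hab : a ≠ b)
    (hne : Equiv.swap j k ≠ Equiv.swap a b)
    {c : Hr n} (h : (xH j - xH k) ∣ (xH a - xH b) * c) : (xH j - xH k) ∣ c := by
  rw [hr_dvd_iff] at h ⊢
  intro v
  have hv : (X (v j) - X (v k)) ∣ (X (v a) - X (v b)) * c v := h v
  refine cancel_poly (v.injective.ne hjk) (v.injective.ne hab) ?_ ?_ hv
  · rintro ⟨h1, h2⟩
    exact hne (by rw [v.injective h1, v.injective h2])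
  · rintro ⟨h1, h2⟩
    rw [v.injective h1, v.injective h2, Equiv.swap_comm] at hne
    exact hne rfl

lemma hr_mul_cancel {a b : Fin n} (hab : a ≠ b) {c d : Hr n}
    (h : (xH a - xH b) * c = (xH a - xH b) * d) : c = d := by
  funext v
  have hv : (X (v a) - X (v b)) * c v = (X (v a) - X (v b)) * d v := congrFun h v
  exact mul_left_cancel₀ (X_sub_X_ne_zero (v.injective.ne hab)) hv

lemma swap_eq_swap {j k p q : Fin n} (hjk : j ≠ k)
    (h : Equiv.swap j k = Equiv.swap p q) :
    (j = p ∧ k = q) ∨ (j = q ∧ k = p) := by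
  have h1 : Equiv.swap p q j = k := by rw [← h, Equiv.swap_apply_left]
  rw [Equiv.swap_apply_def] at h1
  split_ifs at h1 with h2 h3
  · left; exact ⟨h2, h1.symm⟩
  · right; exact ⟨h3, h1.symm⟩
  · exact absurd h1 hjk

lemma ne_of_isSwap_eq {σ : Equiv.Perm (Fin n)} (hσ : σ.IsSwap) {j k : Fin n}
    (h : σ = Equiv.swap j k) : j ≠ k := by
  rintro rfl
  obtain ⟨x, y, hxy, hxyeq⟩ := hσ
  rw [hxyeq] at h
  rw [Equiv.swap_self] at h
  exact hxy (Equiv.swap_eq_one_iff.mp (by rw [h]; rfl))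

lemma condP_sub {σ : Equiv.Perm (Fin n)} {f g : Hr n}
    (hf : condP σ f) (hg : condP σ g) : condP σ (f - g) := by
  intro j k h
  rw [starH_sub, show f - g - (starH f σ - starH g σ)
    = (f - starH f σ) - (g - starH g σ) by ring]
  exact dvd_sub (hf j k h) (hg j k h)

lemma condP_mul {σ : Equiv.Perm (Fin n)} {f g : Hr n}
    (hf : condP σ f) (hg : condP σ g) : condP σ (f * g) := by
  intro j k h
  rw [starH_mul, show f * g - starH f σ * starH g σ
    = f * (g - starH g σ) + (f - starH f σ) * starH g σ by ring]
  exact dvd_add ((hg j k h).mul_left f) ((hf j k h).mul_right _)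

lemma xH_swap_dvd (j k p : Fin n) :
    (xH j - xH k) ∣ (xH (Equiv.swap j k p) - xH p) := by
  rcases eq_or_ne p j with rfl | hpj
  · rw [Equiv.swap_apply_left, show xH k - xH p = -(xH p - xH k) by ring]
    exact (dvd_neg).mpr dvd_rfl
  rcases eq_or_ne p k with rfl | hpk
  · rw [Equiv.swap_apply_right]
  · rw [Equiv.swap_apply_of_ne_of_ne hpj hpk, sub_self]
    exact dvd_zero _

lemma condP_xH (σ : Equiv.Perm (Fin n)) (i : Fin n) : condP σ (xH i) := by
  intro j k h
  subst h
  rw [starH_xH, Equiv.swap_inv]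
  rw [show xH i - xH (Equiv.swap j k i) = -(xH (Equiv.swap j k i) - xH i) by ring]
  exact (dvd_neg).mpr (xH_swap_dvd j k i)

end ASaux
namespace ASaux

variable {n : ℕ}

lemma q_fixed {a b : Fin n} (hab : a ≠ b) {f q : Hr n}
    (hfq : f - starH f (Equiv.swap a b) = (xH a - xH b) * q) :
    starH q (Equiv.swap a b) = q := by
  have h2 := congrArg (fun g => starH g (Equiv.swap a b)) hfq
  simp only [starH_sub, starH_mul, starH_comp, starH_xH, Equiv.swap_inv,
    Equiv.swap_mul_self, starH_id, Equiv.swap_apply_left, Equiv.swap_apply_right] at h2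
  -- h2 : starH f (swap a b) - f = (xH b - xH a) * starH q (swap a b)
  have h3 : (xH a - xH b) * starH q (Equiv.swap a b) = (xH a - xH b) * q := by
    linear_combination h2 + hfq
  exact hr_mul_cancel hab h3

lemma partial_mem {a b : Fin n} (hab : a ≠ b) (D : Set (Equiv.Perm (Fin n)))
    (hD : ∀ σ ∈ D, Equiv.Perm.IsSwap σ)
    (hstab : ∀ σ ∈ D, Equiv.swap a b * σ * Equiv.swap a b ∈ D)
    {f q : Hr n} (hf : f ∈ HCset D)
    (hfq : f - starH f (Equiv.swap a b) = (xH a - xH b) * q) :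
    q ∈ HCset D := by
  have hqfix := q_fixed hab hfq
  intro σ hσ j k hσjk
  have hjk : j ≠ k := ne_of_isSwap_eq (hD σ hσ) hσjk
  by_cases hσs : σ = Equiv.swap a b
  · rw [hσs, hqfix, sub_self]
    exact dvd_zero _
  · set s : Equiv.Perm (Fin n) := Equiv.swap a b with hs
    have hsinv : s⁻¹ = s := Equiv.swap_inv a b
    have hss : s * s = 1 := Equiv.swap_mul_self a b
    have hσinv : σ⁻¹ = σ := by rw [hσjk, Equiv.swap_inv]
    have A : starH f σ - starH f (s * σ) = (xH (σ a) - xH (σ b)) * starH q σ := by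
      have hA := congrArg (fun g => starH g σ) hfq
      simp only [starH_sub, starH_mul, starH_comp, starH_xH, hσinv] at hA
      exact hA
    have hσ'mem : s * σ * s ∈ D := hstab σ hσ
    have hσ'eq : s * σ * s = Equiv.swap (s j) (s k) := by
      rw [Equiv.swap_apply_apply, hσjk, hsinv]
    have B : (xH (s j) - xH (s k)) ∣ (f - starH f (s * σ * s)) :=
      hf _ hσ'mem (s j) (s k) hσ'eq
    have B' : (xH j - xH k) ∣ starH (f - starH f (s * σ * s)) s := by
      have hB := starH_dvd s B
      rwa [starH_sub (xH (s j)) (xH (s k)) s, starH_xH, starH_xH, hs, Equiv.swap_inv,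
        Equiv.swap_apply_self, Equiv.swap_apply_self] at hB
    have hE : (xH j - xH k) ∣ ((xH (σ a) - xH (σ b)) - (xH a - xH b)) := by
      have h1 := xH_swap_dvd j k a
      have h2 := xH_swap_dvd j k b
      rw [← hσjk] at h1 h2
      rw [show (xH (σ a) - xH (σ b)) - (xH a - xH b)
        = (xH (σ a) - xH a) - (xH (σ b) - xH b) by ring]
      exact dvd_sub h1 h2
    have key : (xH j - xH k) ∣ (xH a - xH b) * (q - starH q σ) := by
      have hc : starH (f - starH f (s * σ * s)) s = starH f s - starH f (s * σ) := by
        rw [starH_sub, starH_comp, mul_assoc (s * σ) s s, hss, mul_one]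
      have hid : (xH a - xH b) * (q - starH q σ) =
          ((f - starH f σ) - starH (f - starH f (s * σ * s)) s)
          + ((xH (σ a) - xH (σ b)) - (xH a - xH b)) * starH q σ := by
        rw [hc]
        linear_combination A - hfq
      rw [hid]
      exact dvd_add (dvd_sub (hf σ hσ j k hσjk) B') (hE.mul_right _)
    exact hr_cancel hjk hab (by rw [← hσjk]; exact hσs) key

lemma condP_conj {a b : Fin n} {g : Hr n} (hg : starH g (Equiv.swap a b) = g)
    {σ : Equiv.Perm (Fin n)} (h : condP σ g) :
    condP (Equiv.swap a b * σ * Equiv.swap a b) g := by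
  intro j k hjk
  set s : Equiv.Perm (Fin n) := Equiv.swap a b with hs
  have hsinv : s⁻¹ = s := Equiv.swap_inv a b
  have hss : s * s = 1 := Equiv.swap_mul_self a b
  have hσeq : σ = Equiv.swap (s j) (s k) := by
    rw [Equiv.swap_apply_apply, ← hjk, hsinv,
      show s * (s * σ * s) * s = (s * s) * σ * (s * s) by group, hss, one_mul, mul_one]
  have h1 := h (s j) (s k) hσeq
  have h2 := starH_dvd s h1
  rw [starH_sub (xH (s j)) (xH (s k)) s, starH_xH, starH_xH, hs, Equiv.swap_inv,
    Equiv.swap_apply_self, Equiv.swap_apply_self, ← hs] at h2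
  have e2 : starH (g - starH g σ) s = g - starH g (s * σ * s) := by
    have e3 : starH g (s * σ * s) = starH g (σ * s) := by
      conv_lhs => rw [show s * σ * s = s * (σ * s) by rw [mul_assoc], ← starH_comp, hg]
    rw [starH_sub, starH_comp, hg, e3]
  rwa [e2] at h2

lemma main_case (a b : Fin n) (hab : a ≠ b)
    (C : Set (Equiv.Perm (Fin n)))
    (hC : ∀ τ' ∈ C, Equiv.Perm.IsSwap τ')
    (hsC : Equiv.swap a b ∈ C)
    (τ : Equiv.Perm (Fin n)) (hτC : τ ∈ C)
    (hτout : Equiv.swap a b * τ * Equiv.swap a b ∉ C)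
    (huniq : ∀ τ' ∈ C, Equiv.Perm.IsSwap τ' →
      Equiv.swap a b * τ' * Equiv.swap a b ∉ C → τ' = τ)
    (c d : Fin n) (hcd : c ≠ d) (hτcd : τ = Equiv.swap c d)
    (hfs : starH (xH c - xH d) (Equiv.swap a b) = (xH c - xH d) - (xH a - xH b))
    (f : Hr n) (hf : f ∈ HCset C) :
    ∃! p : Hr n × Hr n,
      (p.1 ∈ HCset (C ∪ {Equiv.swap a b * τ * Equiv.swap a b}) ∧
        starH p.1 (Equiv.swap a b) = p.1) ∧
      (p.2 ∈ HCset (C \ {τ}) ∧ starH p.2 (Equiv.swap a b) = p.2) ∧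
      f = p.1 + (xH c - xH d) * p.2 := by
  set s : Equiv.Perm (Fin n) := Equiv.swap a b with hs
  -- the factor
  set F : Hr n := xH c - xH d with hF
  -- condP τ holds for any multiple of F
  have hfτ : ∀ r : Hr n, condP τ (F * r) := by
    intro r j k hjk
    have hjk' : j ≠ k := ne_of_isSwap_eq ⟨c, d, hcd, hτcd⟩ hjk
    have hsw := swap_eq_swap hjk' (hjk ▸ hτcd : Equiv.swap j k = Equiv.swap c d)
    have hFτ : starH F τ = -F := by
      rw [hF, starH_sub, starH_xH, starH_xH, hτcd, Equiv.swap_inv,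
        Equiv.swap_apply_left, Equiv.swap_apply_right]
      ring
    have hdec : F * r - starH (F * r) τ = F * (r + starH r τ) := by
      rw [starH_mul, hFτ]; ring
    rw [hdec]
    rcases hsw with ⟨h1, h2⟩ | ⟨h1, h2⟩
    · rw [h1, h2, ← hF]; exact Dvd.intro _ rfl
    · rw [h1, h2, show xH d - xH c = -F by rw [hF]; ring]
      exact (neg_dvd).mpr (Dvd.intro _ rfl)
  -- C minus is swap-only and stable
  have hCm_swap : ∀ σ ∈ C \ {τ}, Equiv.Perm.IsSwap σ := fun σ h => hC σ h.1
  have hCm_stab : ∀ σ ∈ C \ {τ}, s * σ * s ∈ C \ {τ} := by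
    rintro σ ⟨hσC, hστ⟩
    have h1 : s * σ * s ∈ C := by
      by_contra hcon
      exact hστ (huniq σ hσC (hC σ hσC) hcon)
    refine ⟨h1, ?_⟩
    intro heq
    have heq' : s * σ * s = τ := heq
    have hss : s * s = 1 := Equiv.swap_mul_self a b
    have : σ = s * τ * s := by
      rw [← heq', show s * (s * σ * s) * s = (s * s) * σ * (s * s) by group, hss,
        one_mul, mul_one]
    exact hτout (by rw [← this]; exact hσC)
  -- get q
  obtain ⟨q, hfq⟩ := hf s hsC a b rfl
  have hqfix : starH q s = q := q_fixed hab hfq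
  have hq : q ∈ HCset (C \ {τ}) :=
    partial_mem hab (C \ {τ}) hCm_swap hCm_stab (fun σ h => hf σ h.1) hfq
  set g : Hr n := f - F * q with hg
  have hf' : starH f s = f - (xH a - xH b) * q := by linear_combination -hfq
  have hgfix : starH g s = g := by
    rw [hg, starH_sub, starH_mul, hfs, hqfix, hf']
    ring
  have hgC : g ∈ HCset C := by
    intro σ hσC
    by_cases hστ : σ = τ
    · rw [hg, hστ]
      exact condP_sub (hf τ hτC) (hfτ q)
    · rw [hg]
      exact condP_sub (hf σ hσC)
        (condP_mul (condP_sub (condP_xH σ c) (condP_xH σ d)) (hq σ ⟨hσC, hστ⟩))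
  have hgCp : g ∈ HCset (C ∪ {s * τ * s}) := by
    intro σ hσ
    rcases hσ with hσC | hστ'
    · exact hgC σ hσC
    · have : σ = s * τ * s := hστ'
      rw [this, hs]
      exact condP_conj hgfix (hgC τ hτC)
  refine ⟨(g, q), ⟨⟨hgCp, hgfix⟩, ⟨hq, hqfix⟩, by rw [hg]; ring⟩, ?_⟩
  rintro ⟨g', q'⟩ ⟨⟨_, hg'fix⟩, ⟨_, hq'fix⟩, hdecomp⟩
  have base : f = g + F * q := by rw [hg]; ring
  have e : g' - g = F * (q - q') := by
    simp only at hdecomp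
    linear_combination base - hdecomp
  have e2 := congrArg (fun x => starH x s) e
  simp only [starH_sub, starH_mul, hg'fix, hgfix, hqfix, hq'fix, hfs, ← hF] at e2
  have e3 : (xH a - xH b) * (q - q') = (xH a - xH b) * 0 := by
    rw [hF] at e e2
    linear_combination e2 - e
  have hqq : q - q' = 0 := hr_mul_cancel hab e3
  have hq'e : q' = q := by linear_combination -hqq
  have hg'e : g' = g := by linear_combination e + F * hqq
  rw [Prod.mk.injEq]
  exact ⟨hg'e, hq'e⟩

end ASaux

open ASaux

/-- Decomposition, almost-stable case: let `C` be
almost-`s`-stable, `s = swap a b` with `b = a + 1`: `s ∈ C`, and `τ` is the unique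
transposition with `τ ∈ C` but `sτs ∉ C`.  Set `C₋ = C \ {τ}` and `C₊ = C ∪ {sτs}`.
If `τ = swap a k`, every `f ∈ HCset C` decomposes uniquely as
`f = g + (xH a - xH k) * h` with `g` in the `s`-fixed part of `HCset C₊` and `h` in
the `s`-fixed part of `HCset C₋`; if `τ = swap b k`, the decomposition is
`f = g + (xH k - xH b) * h`. -/
theorem almost_stable_decomposition (n : ℕ) (a b : Fin n) (hab : (a : ℕ) + 1 = b)
    (C : Set (Equiv.Perm (Fin n)))
    (hC : ∀ τ' ∈ C, Equiv.Perm.IsSwap τ')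
    (hs : Equiv.swap a b ∈ C)
    (τ : Equiv.Perm (Fin n)) (hτ : τ.IsSwap) (hτC : τ ∈ C)
    (hτout : Equiv.swap a b * τ * Equiv.swap a b ∉ C)
    (huniq : ∀ τ' ∈ C, Equiv.Perm.IsSwap τ' →
      Equiv.swap a b * τ' * Equiv.swap a b ∉ C → τ' = τ)
    (k : Fin n) :
    (τ = Equiv.swap a k →
      ∀ f ∈ HCset C, ∃! p : Hr n × Hr n,
        (p.1 ∈ HCset (C ∪ {Equiv.swap a b * τ * Equiv.swap a b}) ∧
          starH p.1 (Equiv.swap a b) = p.1) ∧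
        (p.2 ∈ HCset (C \ {τ}) ∧ starH p.2 (Equiv.swap a b) = p.2) ∧
        f = p.1 + (xH a - xH k) * p.2) ∧
    (τ = Equiv.swap b k →
      ∀ f ∈ HCset C, ∃! p : Hr n × Hr n,
        (p.1 ∈ HCset (C ∪ {Equiv.swap a b * τ * Equiv.swap a b}) ∧
          starH p.1 (Equiv.swap a b) = p.1) ∧
        (p.2 ∈ HCset (C \ {τ}) ∧ starH p.2 (Equiv.swap a b) = p.2) ∧
        f = p.1 + (xH k - xH b) * p.2) := by
  have hab' : a ≠ b := by
    rintro rfl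
    omega
  constructor
  · intro hτeq f hf
    have hak : a ≠ k := ne_of_isSwap_eq hτ hτeq
    have hka : k ≠ a := hak.symm
    have hkb : k ≠ b := by
      intro hkbe
      apply hτout
      rw [hτeq, hkbe, show Equiv.swap a b * Equiv.swap a b * Equiv.swap a b = Equiv.swap a b by
        rw [Equiv.swap_mul_self, one_mul]]
      exact hs
    have hfs : starH (xH a - xH k) (Equiv.swap a b) = (xH a - xH k) - (xH a - xH b) := by
      rw [starH_sub, starH_xH, starH_xH, Equiv.swap_inv,
        Equiv.swap_apply_left, Equiv.swap_apply_of_ne_of_ne hka hkb]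
      ring
    exact main_case a b hab' C hC hs τ hτC hτout huniq a k hak hτeq hfs f hf
  · intro hτeq f hf
    have hbk : b ≠ k := ne_of_isSwap_eq hτ hτeq
    have hkb : k ≠ b := hbk.symm
    have hka : k ≠ a := by
      intro hkae
      apply hτout
      rw [hτeq, hkae, Equiv.swap_comm b a,
        show Equiv.swap a b * Equiv.swap a b * Equiv.swap a b = Equiv.swap a b by
          rw [Equiv.swap_mul_self, one_mul]]
      exact hs
    have hτeq' : τ = Equiv.swap k b := by rw [hτeq, Equiv.swap_comm]
    have hfs : starH (xH k - xH b) (Equiv.swap a b) = (xH k - xH b) - (xH a - xH b) := by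
      rw [starH_sub, starH_xH, starH_xH, Equiv.swap_inv,
        Equiv.swap_apply_of_ne_of_ne hka hkb, Equiv.swap_apply_right]
      ring
    exact main_case a b hab' C hC hs τ hτC hτout huniq k b hkb hτeq' hfs f hf
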